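/- Let I be a centrally generated R-rng. If I is a prime (respectively semiprime) rng, then ann_R(I) is a prime (respectively semiprime) ideal of R. Consequently, if E(R,I) is semiprime with I centrally generated, then R is semiprime. -/

import Mathlib

open MulOpposite

/-- The underlying type of the Dorroh (ideal) extension `E(R,I)`. -/
@[ext]
structure Dorroh (R : Type*) (I : Type*) where
  fst : R
  snd : I

/-- `I` is an `R`-rng: a nonunital ring with a compatible `(R,R)`-bimodule structure. -/
class IsRRng (R I : Type*) [Ring R] [NonUnitalRing I] [Module R I] [Module Rᵐᵒᵖ I] : Prop where
  smul_op_smul : ∀ (r : R) (s : Rᵐᵒᵖ) (x : I), r • s • x = s • r • x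
  smul_mul : ∀ (r : R) (x y : I), r • (x * y) = (r • x) * y
  mul_smul_eq : ∀ (r : R) (x y : I), x * (r • y) = (op r • x) * y
  op_smul_mul : ∀ (r : R) (x y : I), op r • (x * y) = x * (op r • y)

namespace Dorroh

variable {R I : Type*} [Ring R] [NonUnitalRing I] [Module R I] [Module Rᵐᵒᵖ I] [IsRRng R I]

instance : Add (Dorroh R I) := ⟨fun p q => ⟨p.fst + q.fst, p.snd + q.snd⟩⟩
instance : Zero (Dorroh R I) := ⟨⟨0, 0⟩⟩
instance : Neg (Dorroh R I) := ⟨fun p => ⟨-p.fst, -p.snd⟩⟩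
instance : Mul (Dorroh R I) :=
  ⟨fun p q => ⟨p.fst * q.fst, op q.fst • p.snd + p.fst • q.snd + p.snd * q.snd⟩⟩
instance : One (Dorroh R I) := ⟨⟨1, 0⟩⟩

set_option linter.unusedSectionVars false

@[simp] theorem add_fst (p q : Dorroh R I) : (p + q).fst = p.fst + q.fst := rfl
@[simp] theorem add_snd (p q : Dorroh R I) : (p + q).snd = p.snd + q.snd := rfl
@[simp] theorem zero_fst : (0 : Dorroh R I).fst = 0 := rfl
@[simp] theorem zero_snd : (0 : Dorroh R I).snd = 0 := rfl
@[simp] theorem neg_fst (p : Dorroh R I) : (-p).fst = -p.fst := rfl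
@[simp] theorem neg_snd (p : Dorroh R I) : (-p).snd = -p.snd := rfl
@[simp] theorem mul_fst (p q : Dorroh R I) : (p * q).fst = p.fst * q.fst := rfl
@[simp] theorem mul_snd (p q : Dorroh R I) :
    (p * q).snd = op q.fst • p.snd + p.fst • q.snd + p.snd * q.snd := rfl
@[simp] theorem one_fst : (1 : Dorroh R I).fst = 1 := rfl
@[simp] theorem one_snd : (1 : Dorroh R I).snd = 0 := rfl

instance : Ring (Dorroh R I) where
  add_assoc a b c := by ext <;> simp [add_assoc]
  zero_add a := by ext <;> simp
  add_zero a := by ext <;> simp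
  add_comm a b := by ext <;> simp [add_comm]
  neg_add_cancel a := by ext <;> simp
  mul_assoc a b c := by
    ext
    · simp [mul_assoc]
    · simp only [mul_snd, mul_fst, smul_add, mul_smul, op_mul, mul_add, add_mul,
        IsRRng.smul_mul, IsRRng.op_smul_mul, IsRRng.smul_op_smul, mul_assoc]
      rw [← IsRRng.mul_smul_eq]
      abel
  one_mul a := by ext <;> simp
  mul_one a := by ext <;> simp
  left_distrib a b c := by
    ext
    · simp [mul_add]
    · simp [op_add, add_smul, smul_add, mul_add]
      abel
  right_distrib a b c := by
    ext
    · simp [add_mul]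
    · simp [op_add, add_smul, smul_add, add_mul]
      abel
  zero_mul a := by ext <;> simp
  mul_zero a := by ext <;> simp
  nsmul := nsmulRec
  zsmul := zsmulRec

theorem mul_def (p q : Dorroh R I) :
    p * q = ⟨p.fst * q.fst, op q.fst • p.snd + p.fst • q.snd + p.snd * q.snd⟩ := rfl

theorem one_def : (1 : Dorroh R I) = ⟨1, 0⟩ := rfl

theorem add_def (p q : Dorroh R I) : p + q = ⟨p.fst + q.fst, p.snd + q.snd⟩ := rfl

end Dorroh

/-- An `R`-subrng of the `R`-rng `I`: an `(R,R)`-subbimodule closed under multiplication. -/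
def IsRSubrng (R : Type*) {I : Type*} [Ring R] [NonUnitalRing I] [Module R I]
    [Module Rᵐᵒᵖ I] (J : Set I) : Prop :=
  (0 : I) ∈ J ∧ (∀ x ∈ J, ∀ y ∈ J, x + y ∈ J) ∧ (∀ x ∈ J, -x ∈ J) ∧
    (∀ x ∈ J, ∀ y ∈ J, x * y ∈ J) ∧ (∀ (r : R), ∀ x ∈ J, r • x ∈ J) ∧
    (∀ (r : R), ∀ x ∈ J, op r • x ∈ J)

/-- An `R`-ideal of the `R`-rng `I`: an `(R,R)`-subbimodule that is an ideal of `I`. -/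
def IsRIdeal (R : Type*) {I : Type*} [Ring R] [NonUnitalRing I] [Module R I]
    [Module Rᵐᵒᵖ I] (J : Set I) : Prop :=
  IsRSubrng R J ∧ ∀ (i : I), ∀ j ∈ J, i * j ∈ J ∧ j * i ∈ J

/-- The annihilator `ann_R(I) = {r : R | rI = Ir = 0}`. -/
def annR (R I : Type*) [Ring R] [NonUnitalRing I] [Module R I] [Module Rᵐᵒᵖ I] : Set R :=
  {r : R | ∀ x : I, r • x = 0 ∧ op r • x = 0}

/-- An element `x` of a rng is left quasi-regular if `x + k + kx = 0` for some `k`. -/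
def IsLQR {I : Type*} [NonUnitalRing I] (x : I) : Prop := ∃ k : I, x + k + k * x = 0

/-- The Jacobson radical of a rng. -/
def rngRad (I : Type*) [NonUnitalRing I] : Set I := {x : I | ∀ j : I, IsLQR (j * x)}

/-- `npowNZ x n = x ^ (n+1)` in a nonunital ring. -/
def npowNZ {I : Type*} [NonUnitalRing I] (x : I) : ℕ → I
  | 0 => x
  | n + 1 => npowNZ x n * x

/-- An element of a rng is nilpotent if some positive power of it is zero. -/
def IsNilElem {I : Type*} [NonUnitalRing I] (x : I) : Prop := ∃ n : ℕ, npowNZ x n = 0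

/-- A subset of a rng is nil if each of its elements is nilpotent. -/
def SetIsNil {I : Type*} [NonUnitalRing I] (S : Set I) : Prop := ∀ x ∈ S, IsNilElem x

/-- A subset of a rng is nilpotent if for some `n` every product of `n+1` of its
elements vanishes. -/
def SetIsNilpotent {I : Type*} [NonUnitalRing I] (S : Set I) : Prop :=
  ∃ n : ℕ, ∀ (x : I) (l : List I), x ∈ S → (∀ y ∈ l, y ∈ S) → l.length = n →
    l.foldl (· * ·) x = 0

/-- The upper nil radical of a rng: the sum of all of its nil (two-sided) ideals. -/
def upperNil (I : Type*) [NonUnitalRing I] : Set I :=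
  ((sSup {J : TwoSidedIdeal I | ∀ x ∈ J, IsNilElem x} : TwoSidedIdeal I) : Set I)

/-- A rng is semiprime if it has no nonzero ideal of square zero. -/
def IsSemiprimeRng (I : Type*) [NonUnitalRing I] : Prop :=
  ∀ J : TwoSidedIdeal I, (∀ x ∈ J, ∀ y ∈ J, x * y = 0) → J = ⊥

/-- A rng is prime if the product of any two nonzero ideals is nonzero. -/
def IsPrimeRng (I : Type*) [NonUnitalRing I] : Prop :=
  ∀ J K : TwoSidedIdeal I, (∀ x ∈ J, ∀ y ∈ K, x * y = 0) → J = ⊥ ∨ K = ⊥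

/-- `ψ : I → R` restricts to an `R`-homomorphism on the subset `J ⊆ I`. -/
def IsRHomOn (R : Type*) {I : Type*} [Ring R] [NonUnitalRing I] [Module R I]
    [Module Rᵐᵒᵖ I] (J : Set I) (ψ : I → R) : Prop :=
  (∀ x ∈ J, ∀ y ∈ J, ψ (x + y) = ψ x + ψ y) ∧
    (∀ x ∈ J, ∀ y ∈ J, ψ (x * y) = ψ x * ψ y) ∧
    (∀ (r : R), ∀ x ∈ J, ψ (r • x) = r * ψ x) ∧
    (∀ (r : R), ∀ x ∈ J, ψ (op r • x) = ψ x * r)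

/-- `φ : I → R` is an `R`-homomorphism. -/
def IsRHom (R : Type*) {I : Type*} [Ring R] [NonUnitalRing I] [Module R I]
    [Module Rᵐᵒᵖ I] (φ : I → R) : Prop :=
  (∀ x y : I, φ (x + y) = φ x + φ y) ∧ (∀ x y : I, φ (x * y) = φ x * φ y) ∧
    (∀ (r : R) (x : I), φ (r • x) = r * φ x) ∧ (∀ (r : R) (x : I), φ (op r • x) = φ x * r)

/-- A two-sided ideal `P` of a ring is prime if `AB ⊆ P` implies `A ⊆ P` or `B ⊆ P`
for all two-sided ideals `A`, `B`. -/
def TsiPrime {S : Type*} [Ring S] (P : TwoSidedIdeal S) : Prop :=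
  ∀ A B : TwoSidedIdeal S, (∀ a ∈ A, ∀ b ∈ B, a * b ∈ P) → A ≤ P ∨ B ≤ P

/-- A two-sided ideal is maximal if it is a maximal proper ideal. -/
def TsiMaximal {S : Type*} [Ring S] (P : TwoSidedIdeal S) : Prop :=
  P ≠ ⊤ ∧ ∀ Q : TwoSidedIdeal S, P ≤ Q → Q = P ∨ Q = ⊤

/-- A two-sided-ideal subset of a ring. -/
def IsTwoSidedIdealSet (R : Type*) [Ring R] (P : Set R) : Prop :=
  (0 : R) ∈ P ∧ (∀ x ∈ P, ∀ y ∈ P, x + y ∈ P) ∧ (∀ x ∈ P, -x ∈ P) ∧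
    (∀ (r : R), ∀ x ∈ P, r * x ∈ P ∧ x * r ∈ P)

/-- A subset `P` of `R` is a prime ideal if it is a two-sided ideal and `AB ⊆ P`
implies `A ⊆ P` or `B ⊆ P` for all two-sided ideals `A, B`. -/
def IsPrimeIdealSet (R : Type*) [Ring R] (P : Set R) : Prop :=
  IsTwoSidedIdealSet R P ∧ ∀ A B : TwoSidedIdeal R,
    (∀ a ∈ A, ∀ b ∈ B, a * b ∈ P) → ((A : Set R) ⊆ P ∨ (B : Set R) ⊆ P)

/-- A subset `P` of `R` is a semiprime ideal if it is a two-sided ideal and `A² ⊆ P`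
implies `A ⊆ P` for all two-sided ideals `A`. -/
def IsSemiprimeIdealSet (R : Type*) [Ring R] (P : Set R) : Prop :=
  IsTwoSidedIdealSet R P ∧ ∀ A : TwoSidedIdeal R,
    (∀ a ∈ A, ∀ b ∈ A, a * b ∈ P) → (A : Set R) ⊆ P

section IdealData

variable (R I : Type*) [Ring R] [NonUnitalRing I] [Module R I] [Module Rᵐᵒᵖ I] [IsRRng R I]

/-- The data describing an ideal of `E(R,I)`: ideals `Z ⊆ A` of `R`, an `R`-subrng `J ⊆ I`,
and a surjective `R`-homomorphism `φ : J → A/Z` (represented by a set-map `ψ : I → R`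
choosing representatives), satisfying conditions (a) `ai - ji ∈ ker φ` and
(b) `ia - ij ∈ ker φ` for all `(a,-j) ∈ K`, `i ∈ I`. -/
def DorrohIdealData (A Z : TwoSidedIdeal R) (J : Set I) (ψ : I → R) : Prop :=
  Z ≤ A ∧ IsRSubrng R J ∧
    (∀ x ∈ J, ∀ y ∈ J, ψ (x + y) - (ψ x + ψ y) ∈ Z) ∧
    (∀ x ∈ J, ∀ y ∈ J, ψ (x * y) - ψ x * ψ y ∈ Z) ∧
    (∀ (r : R), ∀ x ∈ J, ψ (r • x) - r * ψ x ∈ Z) ∧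
    (∀ (r : R), ∀ x ∈ J, ψ (op r • x) - ψ x * r ∈ Z) ∧
    (∀ j ∈ J, ψ j ∈ A) ∧
    (∀ a ∈ A, ∃ j ∈ J, a - ψ j ∈ Z) ∧
    (∀ (a : R), ∀ j ∈ J, a ∈ A → a - ψ j ∈ Z → ∀ i : I,
      (a • i - j * i ∈ J ∧ ψ (a • i - j * i) ∈ Z) ∧
      (op a • i - i * j ∈ J ∧ ψ (op a • i - i * j) ∈ Z))

/-- The subset `K = {(a, -j) : a ∈ A, j ∈ J, a + Z = φ(j)}` of `E(R,I)`. -/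
def DorrohIdealSet (A Z : TwoSidedIdeal R) (J : Set I) (ψ : I → R) : Set (Dorroh R I) :=
  {p : Dorroh R I | p.fst ∈ A ∧ -p.snd ∈ J ∧ p.fst - ψ (-p.snd) ∈ Z}

end IdealData

variable (R I : Type*) [Ring R] [NonUnitalRing I] [Module R I] [Module Rᵐᵒᵖ I] [IsRRng R I]

open MulOpposite


section CapAux

variable {S : Set I}

/-- Generators of the ideal of `I` associated to an ideal `A` of `R`. -/
def capGen (A : TwoSidedIdeal R) : Set I :=
  {z : I | ∃ a ∈ A, ∃ i : I, z = a • i ∨ z = op a • i}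

/-- The additive subgroup generated by `capGen`. -/
def capCl (A : TwoSidedIdeal R) : AddSubgroup I := AddSubgroup.closure (capGen R I A)

variable {R I}

lemma mem_capGen_smul {A : TwoSidedIdeal R} {a : R} (ha : a ∈ A) (i : I) :
    a • i ∈ capGen R I A := ⟨a, ha, i, Or.inl rfl⟩

lemma mem_capGen_op {A : TwoSidedIdeal R} {a : R} (ha : a ∈ A) (i : I) :
    op a • i ∈ capGen R I A := ⟨a, ha, i, Or.inr rfl⟩

lemma k_ob (a b : R) (hab : ∀ (r : R) (y : I), (a * r * b) • y = 0) (i j : I) :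
    (op a • i) * (b • j) = 0 := by
  rw [← IsRRng.mul_smul_eq a i (b • j), smul_smul]
  have h2 : (a * b) • j = 0 := by simpa using hab 1 j
  rw [h2, mul_zero]

lemma k_ab (hS : ∀ x ∈ S, ∀ r : R, r • x = op r • x) (hspan : Submodule.span R S = ⊤)
    (b : R) (j : I) (i : I) :
    ∀ a : R, (∀ (r : R) (y : I), (a * r * b) • y = 0) → (a • i) * (b • j) = 0 := by
  have hi : i ∈ Submodule.span R S := by rw [hspan]; trivial
  induction hi using Submodule.span_induction with
  | mem x hx =>
    intro a ha
    rw [hS x hx a]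
    exact k_ob a b ha x j
  | zero => intro a ha; rw [smul_zero, zero_mul]
  | add x y hx hy ihx ihy =>
    intro a ha; rw [smul_add, add_mul, ihx a ha, ihy a ha, add_zero]
  | smul r x hx ih =>
    intro a ha
    rw [smul_smul]
    exact ih (a * r) (fun r' y => by simpa [mul_assoc] using ha (r * r') y)

lemma k_aob (hS : ∀ x ∈ S, ∀ r : R, r • x = op r • x) (hspan : Submodule.span R S = ⊤)
    (a b : R) (hab : ∀ (r : R) (y : I), (a * r * b) • y = 0) (j : I) :
    ∀ i : I, (a • i) * (op b • j) = 0 := by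
  have hj : j ∈ Submodule.span R S := by rw [hspan]; trivial
  induction hj using Submodule.span_induction with
  | mem s hs =>
    intro i
    rw [← hS s hs b]
    exact k_ab hS hspan b s i a hab
  | zero => intro i; rw [smul_zero, mul_zero]
  | add x y hx hy ihx ihy =>
    intro i; rw [smul_add, mul_add, ihx i, ihy i, add_zero]
  | smul r x hx ih =>
    intro i
    rw [show op b • (r • x) = r • (op b • x) from (IsRRng.smul_op_smul r (op b) x).symm,
      IsRRng.mul_smul_eq r (a • i) (op b • x),
      show op r • (a • i) = a • (op r • i) from (IsRRng.smul_op_smul a (op r) i).symm]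
    exact ih (op r • i)

lemma k_obob (hS : ∀ x ∈ S, ∀ r : R, r • x = op r • x) (hspan : Submodule.span R S = ⊤)
    (b : R) (i : I) (j : I) :
    ∀ a : R, (∀ (r : R) (y : I), (a * r * b) • y = 0) → (op a • i) * (op b • j) = 0 := by
  have hj : j ∈ Submodule.span R S := by rw [hspan]; trivial
  induction hj using Submodule.span_induction with
  | mem s hs =>
    intro a hab
    rw [← hS s hs b]
    exact k_ob a b hab i s
  | zero => intro a hab; rw [smul_zero, mul_zero]
  | add x y hx hy ihx ihy =>
    intro a hab; rw [smul_add, mul_add, ihx a hab, ihy a hab, add_zero]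
  | smul r x hx ih =>
    intro a hab
    rw [show op b • (r • x) = r • (op b • x) from (IsRRng.smul_op_smul r (op b) x).symm,
      IsRRng.mul_smul_eq r (op a • i) (op b • x),
      show op r • (op a • i) = op (a * r) • i by rw [smul_smul, ← op_mul]]
    exact ih (a * r) (fun r' y => by simpa [mul_assoc] using hab (r * r') y)

lemma gen_mul_gen_zero (hS : ∀ x ∈ S, ∀ r : R, r • x = op r • x)
    (hspan : Submodule.span R S = ⊤) {A B : TwoSidedIdeal R}
    (hAB : ∀ a ∈ A, ∀ b ∈ B, ∀ y : I, (a * b) • y = 0)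
    {z w : I} (hz : z ∈ capGen R I A) (hw : w ∈ capGen R I B) : z * w = 0 := by
  obtain ⟨a, ha, i, hz⟩ := hz
  obtain ⟨b, hb, j, hw⟩ := hw
  have hab : ∀ (r : R) (y : I), (a * r * b) • y = 0 :=
    fun r y => hAB _ (A.mul_mem_right a r ha) b hb y
  rcases hz with rfl | rfl <;> rcases hw with rfl | rfl
  · exact k_ab hS hspan b j i a hab
  · exact k_aob hS hspan a b hab j i
  · exact k_ob a b hab i j
  · exact k_obob hS hspan b i j a hab

lemma gen_mul_cl_zero (hS : ∀ x ∈ S, ∀ r : R, r • x = op r • x)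
    (hspan : Submodule.span R S = ⊤) {A B : TwoSidedIdeal R}
    (hAB : ∀ a ∈ A, ∀ b ∈ B, ∀ y : I, (a * b) • y = 0)
    {z : I} (hz : z ∈ capGen R I A) : ∀ w ∈ capCl R I B, z * w = 0 := by
  intro w hw
  induction hw using AddSubgroup.closure_induction with
  | mem y hy => exact gen_mul_gen_zero hS hspan hAB hz hy
  | zero => exact mul_zero z
  | add x y hx hy ihx ihy => rw [mul_add, ihx, ihy, add_zero]
  | neg x hx ih => rw [mul_neg, ih, neg_zero]

lemma cl_mul_cl_zero (hS : ∀ x ∈ S, ∀ r : R, r • x = op r • x)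
    (hspan : Submodule.span R S = ⊤) {A B : TwoSidedIdeal R}
    (hAB : ∀ a ∈ A, ∀ b ∈ B, ∀ y : I, (a * b) • y = 0) :
    ∀ z ∈ capCl R I A, ∀ w ∈ capCl R I B, z * w = 0 := by
  intro z hz
  induction hz using AddSubgroup.closure_induction with
  | mem x hx => exact gen_mul_cl_zero hS hspan hAB hx
  | zero => intro w hw; exact zero_mul w
  | add x y hx hy ihx ihy => intro w hw; rw [add_mul, ihx w hw, ihy w hw, add_zero]
  | neg x hx ih => intro w hw; rw [neg_mul, ih w hw, neg_zero]

lemma cl_smul {A : TwoSidedIdeal R} (r : R) {z : I} (hz : z ∈ capCl R I A) :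
    r • z ∈ capCl R I A := by
  induction hz using AddSubgroup.closure_induction with
  | mem x hx =>
    obtain ⟨a, ha, i, hx⟩ := hx
    rcases hx with rfl | rfl
    · rw [smul_smul]
      exact AddSubgroup.subset_closure (mem_capGen_smul (A.mul_mem_left r a ha) i)
    · rw [IsRRng.smul_op_smul r (op a) i]
      exact AddSubgroup.subset_closure (mem_capGen_op ha (r • i))
  | zero => rw [smul_zero]; exact zero_mem _
  | add x y hx hy ihx ihy => rw [smul_add]; exact add_mem ihx ihy
  | neg x hx ih => rw [smul_neg]; exact neg_mem ih

lemma cl_op_smul {A : TwoSidedIdeal R} (r : R) {z : I} (hz : z ∈ capCl R I A) :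
    op r • z ∈ capCl R I A := by
  induction hz using AddSubgroup.closure_induction with
  | mem x hx =>
    obtain ⟨a, ha, i, hx⟩ := hx
    rcases hx with rfl | rfl
    · rw [← IsRRng.smul_op_smul a (op r) i]
      exact AddSubgroup.subset_closure (mem_capGen_smul ha (op r • i))
    · rw [smul_smul, ← op_mul]
      exact AddSubgroup.subset_closure (mem_capGen_op (A.mul_mem_right a r ha) i)
  | zero => rw [smul_zero]; exact zero_mem _
  | add x y hx hy ihx ihy => rw [smul_add]; exact add_mem ihx ihy
  | neg x hx ih => rw [smul_neg]; exact neg_mem ih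

lemma op_gen_mul (hS : ∀ x ∈ S, ∀ r : R, r • x = op r • x)
    (hspan : Submodule.span R S = ⊤) {A : TwoSidedIdeal R} (y : I) (i : I) :
    ∀ a ∈ A, (op a • i) * y ∈ capCl R I A := by
  have hi : i ∈ Submodule.span R S := by rw [hspan]; trivial
  induction hi using Submodule.span_induction with
  | mem s hs =>
    intro a ha
    rw [← hS s hs a, ← IsRRng.smul_mul a s y]
    exact AddSubgroup.subset_closure (mem_capGen_smul ha (s * y))
  | zero => intro a ha; rw [smul_zero, zero_mul]; exact zero_mem _
  | add x1 x2 h1 h2 ih1 ih2 =>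
    intro a ha; rw [smul_add, add_mul]; exact add_mem (ih1 a ha) (ih2 a ha)
  | smul r x hx ih =>
    intro a ha
    rw [show op a • (r • x) = r • (op a • x) from (IsRRng.smul_op_smul r (op a) x).symm,
      ← IsRRng.smul_mul r (op a • x) y]
    exact cl_smul r (ih a ha)

lemma mul_smul_gen (hS : ∀ x ∈ S, ∀ r : R, r • x = op r • x)
    (hspan : Submodule.span R S = ⊤) {A : TwoSidedIdeal R} (y : I) (i : I) :
    ∀ a ∈ A, y * (a • i) ∈ capCl R I A := by
  have hi : i ∈ Submodule.span R S := by rw [hspan]; trivial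
  induction hi using Submodule.span_induction with
  | mem s hs =>
    intro a ha
    rw [hS s hs a, ← IsRRng.op_smul_mul a y s]
    exact AddSubgroup.subset_closure (mem_capGen_op ha (y * s))
  | zero => intro a ha; rw [smul_zero, mul_zero]; exact zero_mem _
  | add x1 x2 h1 h2 ih1 ih2 =>
    intro a ha; rw [smul_add, mul_add]; exact add_mem (ih1 a ha) (ih2 a ha)
  | smul r x hx ih =>
    intro a ha
    rw [smul_smul]
    exact ih (a * r) (A.mul_mem_right a r ha)

lemma cl_mul_right (hS : ∀ x ∈ S, ∀ r : R, r • x = op r • x)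
    (hspan : Submodule.span R S = ⊤) {A : TwoSidedIdeal R} (y : I) {z : I}
    (hz : z ∈ capCl R I A) : z * y ∈ capCl R I A := by
  induction hz using AddSubgroup.closure_induction with
  | mem x hx =>
    obtain ⟨a, ha, i, hx⟩ := hx
    rcases hx with rfl | rfl
    · rw [← IsRRng.smul_mul a i y]
      exact AddSubgroup.subset_closure (mem_capGen_smul ha (i * y))
    · exact op_gen_mul hS hspan y i a ha
  | zero => rw [zero_mul]; exact zero_mem _
  | add x1 x2 h1 h2 ih1 ih2 => rw [add_mul]; exact add_mem ih1 ih2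
  | neg x hx ih => rw [neg_mul]; exact neg_mem ih

lemma cl_mul_left (hS : ∀ x ∈ S, ∀ r : R, r • x = op r • x)
    (hspan : Submodule.span R S = ⊤) {A : TwoSidedIdeal R} (y : I) {z : I}
    (hz : z ∈ capCl R I A) : y * z ∈ capCl R I A := by
  induction hz using AddSubgroup.closure_induction with
  | mem x hx =>
    obtain ⟨a, ha, i, hx⟩ := hx
    rcases hx with rfl | rfl
    · exact mul_smul_gen hS hspan y i a ha
    · rw [← IsRRng.op_smul_mul a y i]
      exact AddSubgroup.subset_closure (mem_capGen_op ha (y * i))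
  | zero => rw [mul_zero]; exact zero_mem _
  | add x1 x2 h1 h2 ih1 ih2 => rw [mul_add]; exact add_mem ih1 ih2
  | neg x hx ih => rw [mul_neg]; exact neg_mem ih

variable (R I) in
/-- The ideal of `I` associated to an ideal `A` of `R`. -/
def capIdeal (hS : ∀ x ∈ S, ∀ r : R, r • x = op r • x)
    (hspan : Submodule.span R S = ⊤) (A : TwoSidedIdeal R) : TwoSidedIdeal I :=
  TwoSidedIdeal.mk' (capCl R I A : Set I) (zero_mem _)
    (fun hx hy => add_mem hx hy) (fun hx => neg_mem hx)
    (fun hy => cl_mul_left hS hspan _ hy) (fun hx => cl_mul_right hS hspan _ hx)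

lemma mem_capIdeal {hS : ∀ x ∈ S, ∀ r : R, r • x = op r • x}
    {hspan : Submodule.span R S = ⊤} {A : TwoSidedIdeal R} {z : I} :
    z ∈ capIdeal R I hS hspan A ↔ z ∈ capCl R I A :=
  TwoSidedIdeal.mem_mk' _ _ _ _ _ _ z

lemma sub_ann_of_capIdeal_bot {hS : ∀ x ∈ S, ∀ r : R, r • x = op r • x}
    {hspan : Submodule.span R S = ⊤} {A : TwoSidedIdeal R}
    (h : capIdeal R I hS hspan A = ⊥) : ∀ a ∈ A, a ∈ annR R I := by
  intro a ha x
  constructor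
  · have h1 : a • x ∈ capIdeal R I hS hspan A :=
      mem_capIdeal.mpr (AddSubgroup.subset_closure (mem_capGen_smul ha x))
    rw [h] at h1
    exact h1
  · have h1 : op a • x ∈ capIdeal R I hS hspan A :=
      mem_capIdeal.mpr (AddSubgroup.subset_closure (mem_capGen_op ha x))
    rw [h] at h1
    exact h1

variable (R I) in
lemma ann_tsi : IsTwoSidedIdealSet R (annR R I) := by
  refine ⟨fun x => by simp, ?_, ?_, ?_⟩
  · intro r hr s hs x
    refine ⟨?_, ?_⟩
    · rw [add_smul, (hr x).1, (hs x).1, add_zero]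
    · rw [op_add, add_smul, (hr x).2, (hs x).2, add_zero]
  · intro r hr x
    refine ⟨?_, ?_⟩
    · rw [neg_smul, (hr x).1, neg_zero]
    · rw [op_neg, neg_smul, (hr x).2, neg_zero]
  · intro s r hr
    constructor
    · intro x
      refine ⟨?_, ?_⟩
      · rw [mul_smul, (hr x).1, smul_zero]
      · rw [op_mul, mul_smul]
        exact (hr (op s • x)).2
    · intro x
      refine ⟨?_, ?_⟩
      · rw [mul_smul]
        exact (hr (s • x)).1
      · rw [op_mul, mul_smul, (hr x).2, smul_zero]

lemma z_op_smul (hS : ∀ x ∈ S, ∀ r : R, r • x = op r • x)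
    (hspan : Submodule.span R S = ⊤) {A : TwoSidedIdeal R}
    (hA0 : ∀ x ∈ A, ∀ y ∈ A, x * y = 0) {b : R} (hb : b ∈ A) (i : I) :
    ∀ a ∈ A, op b • (a • i) = (0 : I) := by
  have hi : i ∈ Submodule.span R S := by rw [hspan]; trivial
  induction hi using Submodule.span_induction with
  | mem s hs =>
    intro a ha
    rw [hS s hs a, smul_smul, ← op_mul, hA0 a ha b hb, op_zero, zero_smul]
  | zero => intro a ha; rw [smul_zero, smul_zero]
  | add x y hx hy ihx ihy =>
    intro a ha; rw [smul_add, smul_add, ihx a ha, ihy a ha, add_zero]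
  | smul r x hx ih =>
    intro a ha
    rw [smul_smul]
    exact ih (a * r) (A.mul_mem_right a r ha)

lemma z_smul_cl (hS : ∀ x ∈ S, ∀ r : R, r • x = op r • x)
    (hspan : Submodule.span R S = ⊤) {A : TwoSidedIdeal R}
    (hA0 : ∀ x ∈ A, ∀ y ∈ A, x * y = 0) {a : R} (ha : a ∈ A) {z : I}
    (hz : z ∈ capCl R I A) : a • z = 0 ∧ op a • z = 0 := by
  induction hz using AddSubgroup.closure_induction with
  | mem x hx =>
    obtain ⟨b, hb, j, hx⟩ := hx
    rcases hx with rfl | rfl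
    · constructor
      · rw [smul_smul, hA0 a ha b hb, zero_smul]
      · exact z_op_smul hS hspan hA0 ha j b hb
    · constructor
      · rw [IsRRng.smul_op_smul a (op b) j]
        exact z_op_smul hS hspan hA0 hb j a ha
      · rw [smul_smul, ← op_mul, hA0 b hb a ha, op_zero, zero_smul]
  | zero => exact ⟨smul_zero _, smul_zero _⟩
  | add x y hx hy ihx ihy =>
    exact ⟨by rw [smul_add, ihx.1, ihy.1, add_zero],
      by rw [smul_add, ihx.2, ihy.2, add_zero]⟩
  | neg x hx ih =>
    exact ⟨by rw [smul_neg, ih.1, neg_zero], by rw [smul_neg, ih.2, neg_zero]⟩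

variable (R I) in
/-- The ideal of `E(R,I)` associated to a square-zero ideal `A ⊆ ann_R(I)` of `R`. -/
def capDorroh (hS : ∀ x ∈ S, ∀ r : R, r • x = op r • x)
    (hspan : Submodule.span R S = ⊤) (A : TwoSidedIdeal R) :
    TwoSidedIdeal (Dorroh R I) :=
  TwoSidedIdeal.mk' {p : Dorroh R I | p.fst ∈ A ∧ p.snd ∈ capCl R I A}
    ⟨A.zero_mem, zero_mem _⟩
    (fun hx hy => ⟨A.add_mem hx.1 hy.1, add_mem hx.2 hy.2⟩)
    (fun hx => ⟨A.neg_mem hx.1, neg_mem hx.2⟩)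
    (fun {x y} hy => ⟨A.mul_mem_left _ _ hy.1,
      add_mem (add_mem (AddSubgroup.subset_closure (mem_capGen_op hy.1 x.snd))
        (cl_smul x.fst hy.2)) (cl_mul_left hS hspan x.snd hy.2)⟩)
    (fun {x y} hx => ⟨A.mul_mem_right _ _ hx.1,
      add_mem (add_mem (cl_op_smul y.fst hx.2)
        (AddSubgroup.subset_closure (mem_capGen_smul hx.1 y.snd)))
        (cl_mul_right hS hspan y.snd hx.2)⟩)

lemma mem_capDorroh {hS : ∀ x ∈ S, ∀ r : R, r • x = op r • x}
    {hspan : Submodule.span R S = ⊤} {A : TwoSidedIdeal R} {p : Dorroh R I} :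
    p ∈ capDorroh R I hS hspan A ↔ p.fst ∈ A ∧ p.snd ∈ capCl R I A :=
  TwoSidedIdeal.mem_mk' _ _ _ _ _ _ p

end CapAux

/-- If `I` is a centrally generated `R`-rng that is prime (resp. semiprime), then
`ann_R(I)` is a prime (resp. semiprime) ideal of `R`; consequently, if `E(R,I)` is
semiprime then so is `R`. -/
theorem central_ann_prime
    (hcg : ∃ S : Set I, (∀ x ∈ S, ∀ r : R, r • x = op r • x) ∧ Submodule.span R S = ⊤) :
    (IsPrimeRng I → IsPrimeIdealSet R (annR R I)) ∧
    (IsSemiprimeRng I → IsSemiprimeIdealSet R (annR R I)) ∧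
    (IsSemiprimeRng (Dorroh R I) → IsSemiprimeRng R) := by
  obtain ⟨S, hS, hspan⟩ := hcg
  refine ⟨?_, ?_, ?_⟩
  · -- prime case
    intro hP
    refine ⟨ann_tsi R I, ?_⟩
    intro A B hAB
    have hAB' : ∀ a ∈ A, ∀ b ∈ B, ∀ y : I, (a * b) • y = 0 :=
      fun a ha b hb y => (hAB a ha b hb y).1
    rcases hP (capIdeal R I hS hspan A) (capIdeal R I hS hspan B)
        (fun x hx y hy => cl_mul_cl_zero hS hspan hAB' x (mem_capIdeal.mp hx) y
          (mem_capIdeal.mp hy)) with h | h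
    · exact Or.inl (fun a ha => sub_ann_of_capIdeal_bot h a ha)
    · exact Or.inr (fun b hb => sub_ann_of_capIdeal_bot h b hb)
  · -- semiprime case
    intro hSP
    refine ⟨ann_tsi R I, ?_⟩
    intro A hAA
    have hAB' : ∀ a ∈ A, ∀ b ∈ A, ∀ y : I, (a * b) • y = 0 :=
      fun a ha b hb y => (hAA a ha b hb y).1
    have h := hSP (capIdeal R I hS hspan A)
      (fun x hx y hy => cl_mul_cl_zero hS hspan hAB' x (mem_capIdeal.mp hx) y
        (mem_capIdeal.mp hy))
    exact fun a ha => sub_ann_of_capIdeal_bot h a ha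
  · -- Dorroh semiprime implies R semiprime
    intro hE A hA
    have hAB' : ∀ a ∈ A, ∀ b ∈ A, ∀ y : I, (a * b) • y = 0 :=
      fun a ha b hb y => by rw [hA a ha b hb, zero_smul]
    have hK2 : ∀ p ∈ capDorroh R I hS hspan A, ∀ q ∈ capDorroh R I hS hspan A,
        p * q = 0 := by
      intro p hp q hq
      obtain ⟨hp1, hp2⟩ := mem_capDorroh.mp hp
      obtain ⟨hq1, hq2⟩ := mem_capDorroh.mp hq
      refine Dorroh.ext ?_ ?_
      · show p.fst * q.fst = 0
        exact hA _ hp1 _ hq1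
      · show op q.fst • p.snd + p.fst • q.snd + p.snd * q.snd = 0
        rw [(z_smul_cl hS hspan hA hq1 hp2).2, (z_smul_cl hS hspan hA hp1 hq2).1,
          cl_mul_cl_zero hS hspan hAB' _ hp2 _ hq2, add_zero, add_zero]
    have hKbot := hE _ hK2
    refine SetLike.ext fun a => ⟨fun ha => ?_, fun ha => ?_⟩
    · have hmem : (⟨a, 0⟩ : Dorroh R I) ∈ capDorroh R I hS hspan A :=
        mem_capDorroh.mpr ⟨ha, zero_mem _⟩
      rw [hKbot] at hmem
      have h0 : (⟨a, 0⟩ : Dorroh R I) = 0 := hmem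
      show a = 0
      exact congrArg Dorroh.fst h0
    · have h0 : a = 0 := ha
      rw [h0]; exact A.zero_mem
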